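/- Tensor product structure: let C be the subalgebra {T ∈ B(H) : T commutes with a₁, a₂ and a₃} of B(H), and let ι : Matrix (Fin 2) (Fin 2) ℂ → B(H) be the unital star-algebra homomorphism determined by ι(σᵢ) = aᵢ (i = 1,2,3, with σᵢ the standard Pauli matrices). Then there exists a ℂ-algebra equivalence π : (Matrix (Fin 2) (Fin 2) ℂ) ⊗[ℂ] C ≃ B(H) satisfying π(m ⊗ b) = ι(m) ∘ b for every m ∈ Matrix (Fin 2) (Fin 2) ℂ and b ∈ C; moreover π is star-preserving. -/

import Mathlib

open Complex

noncomputable section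

/-- The Hilbert space `H := ℓ²(ℤ, ℂ)`. -/
abbrev H : Type := lp (fun _ : ℤ => ℂ) 2

/-- The orthonormal basis vectors `e ℓ = lp.single 2 ℓ 1`. -/
def e (ℓ : ℤ) : H := lp.single 2 ℓ 1

/-- `a₃ := U(π)`. -/
def a₃ (U : ℝ → (H →L[ℂ] H)) : H →L[ℂ] H := U Real.pi

/-- `a₊ := (1/2) • ((1 − U(π)) ∘ V*)`. -/
def aPlus (U : ℝ → (H →L[ℂ] H)) (V : unitary (H →L[ℂ] H)) : H →L[ℂ] H :=
  ((1 : ℂ) / 2) • ((1 - U Real.pi) ∘L star (V : H →L[ℂ] H))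

/-- `a₋ := (1/2) • ((1 + U(π)) ∘ V)`. -/
def aMinus (U : ℝ → (H →L[ℂ] H)) (V : unitary (H →L[ℂ] H)) : H →L[ℂ] H :=
  ((1 : ℂ) / 2) • ((1 + U Real.pi) ∘L (V : H →L[ℂ] H))

/-- `a₁ := a₊ + a₋`. -/
def a₁ (U : ℝ → (H →L[ℂ] H)) (V : unitary (H →L[ℂ] H)) : H →L[ℂ] H :=
  aPlus U V + aMinus U V

/-- `a₂ := −i•a₊ + i•a₋`. -/
def a₂ (U : ℝ → (H →L[ℂ] H)) (V : unitary (H →L[ℂ] H)) : H →L[ℂ] H :=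
  (-Complex.I) • aPlus U V + Complex.I • aMinus U V

namespace TPSAux

open scoped TensorProduct
open Matrix

variable {A : Type*} [Ring A] [Algebra ℂ A] [StarRing A] [StarModule ℂ A]

local notation "M2" => Matrix (Fin 2) (Fin 2) ℂ

lemma pauli_decomp (m : M2) :
    m = ((m 0 0 + m 1 1)/2) • (1 : M2) + ((m 0 1 + m 1 0)/2) • !![0, 1; 1, 0]
      + (Complex.I * (m 0 1 - m 1 0)/2) • !![0, -Complex.I; Complex.I, 0]
      + ((m 0 0 - m 1 1)/2) • !![1, 0; 0, -1] := by
  ext i j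
  fin_cases i <;> fin_cases j <;> simp [Matrix.one_apply]
  · ring
  · ring_nf; rw [Complex.I_sq]; ring
  · ring_nf; rw [Complex.I_sq]; ring
  · ring

lemma star_pauli₁ : star (!![0, 1; 1, 0] : M2) = !![0, 1; 1, 0] := by
  ext i j; fin_cases i <;> fin_cases j <;>
    simp [Matrix.star_apply]

lemma star_pauli₂ : star (!![0, -Complex.I; Complex.I, 0] : M2)
    = !![0, -Complex.I; Complex.I, 0] := by
  ext i j; fin_cases i <;> fin_cases j <;>
    simp [Matrix.star_apply]

lemma star_pauli₃ : star (!![1, 0; 0, -1] : M2) = !![1, 0; 0, -1] := by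
  ext i j; fin_cases i <;> fin_cases j <;>
    simp [Matrix.star_apply]

lemma m_decomp (m : M2) :
    m = m 0 0 • Matrix.single 0 0 (1:ℂ) + m 0 1 • Matrix.single 0 1 1
      + m 1 0 • Matrix.single 1 0 1 + m 1 1 • Matrix.single 1 1 1 := by
  ext i j
  fin_cases i <;> fin_cases j <;> simp [Matrix.single]

lemma std_sandwich (m : M2) (i j k : Fin 2) :
    Matrix.single k i (1:ℂ) * m * Matrix.single j k 1 = m i j • Matrix.single k k 1 := by
  ext a b
  simp [Matrix.mul_apply, Matrix.single, Fin.sum_univ_two, Matrix.smul_apply]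
  fin_cases a <;> fin_cases b <;> fin_cases k <;> fin_cases i <;> fin_cases j <;> simp

theorem aux (ι : M2 →⋆ₐ[ℂ] A) :
    ∃ π : (M2 ⊗[ℂ]
        (StarSubalgebra.centralizer ℂ
          ({ι !![0, 1; 1, 0], ι !![0, -Complex.I; Complex.I, 0],
            ι !![1, 0; 0, -1]} : Set A))) ≃ₐ[ℂ] A,
      (∀ (m : M2) (b : StarSubalgebra.centralizer ℂ
          ({ι !![0, 1; 1, 0], ι !![0, -Complex.I; Complex.I, 0],
            ι !![1, 0; 0, -1]} : Set A)),
        π (m ⊗ₜ[ℂ] b) = ι m * (b : A)) ∧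
      (∀ (m : M2) (b : StarSubalgebra.centralizer ℂ
          ({ι !![0, 1; 1, 0], ι !![0, -Complex.I; Complex.I, 0],
            ι !![1, 0; 0, -1]} : Set A)),
        π (star m ⊗ₜ[ℂ] star b) = star (π (m ⊗ₜ[ℂ] b))) := by
  set C := StarSubalgebra.centralizer ℂ
      ({ι !![0, 1; 1, 0], ι !![0, -Complex.I; Complex.I, 0],
        ι !![1, 0; 0, -1]} : Set A) with hCdef
  -- elements of C commute with everything in the range of ι
  have hcomm : ∀ b : A, b ∈ C → ∀ m : M2, Commute (ι m) b := by
    intro b hb m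
    rw [hCdef, StarSubalgebra.mem_centralizer_iff] at hb
    have h1 : Commute (ι !![0, 1; 1, 0]) b := (hb _ (by simp)).1
    have h2 : Commute (ι !![0, -Complex.I; Complex.I, 0]) b := (hb _ (by simp)).1
    have h3 : Commute (ι !![1, 0; 0, -1]) b := (hb _ (by simp)).1
    rw [pauli_decomp m]
    simp only [map_add, _root_.map_smul, _root_.map_one]
    exact ((((Commute.one_left b).smul_left _).add_left (h1.smul_left _)).add_left
      (h2.smul_left _)).add_left (h3.smul_left _)
  -- the algebra hom π₀
  let π0 : (M2 ⊗[ℂ] C) →ₐ[ℂ] A :=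
    Algebra.TensorProduct.lift ι.toAlgHom C.subtype.toAlgHom
      (fun m b => hcomm (b : A) b.2 m)
  have hπ0 : ∀ (m : M2) (b : C), π0 (m ⊗ₜ[ℂ] b) = ι m * (b : A) := fun m b => by
    exact Algebra.TensorProduct.lift_tmul _ _ _ m b
  -- matrix units
  set E : Fin 2 → Fin 2 → A := fun i j => ι (Matrix.single i j (1:ℂ)) with hEdef
  have hE : ∀ i j k l, E i j * E k l = if j = k then E i l else 0 := by
    intro i j k l
    by_cases h : j = k
    · subst h
      rw [if_pos rfl]
      show ι _ * ι _ = ι _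
      rw [← _root_.map_mul, Matrix.single_mul_single_same, one_mul]
    · rw [if_neg h]
      show ι _ * ι _ = 0
      rw [← _root_.map_mul, Matrix.single_mul_single_of_ne (h := h), map_zero]
  have hE' : ∀ (i j k l : Fin 2) (x : A),
      E i j * (E k l * x) = if j = k then E i l * x else 0 := by
    intro i j k l x
    rw [← mul_assoc, hE]
    split <;> simp
  have hone : E 0 0 + E 1 1 = 1 := by
    have h : (Matrix.single 0 0 (1:ℂ) + Matrix.single 1 1 1 : M2) = 1 := by
      ext i j; fin_cases i <;> fin_cases j <;> simp [Matrix.single, Matrix.one_apply]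
    calc E 0 0 + E 1 1 = ι (Matrix.single 0 0 (1:ℂ) + Matrix.single 1 1 1) := by
            rw [map_add]
      _ = 1 := by rw [h, _root_.map_one]
  have hιE : ∀ m : M2,
      ι m = m 0 0 • E 0 0 + m 0 1 • E 0 1 + m 1 0 • E 1 0 + m 1 1 • E 1 1 := by
    intro m
    conv_lhs => rw [m_decomp m]
    simp only [map_add, _root_.map_smul, hEdef]
  -- the candidate inverse components
  set c : Fin 2 → Fin 2 → A → A :=
    fun i j T => E 0 i * (T * E j 0) + E 1 i * (T * E j 1) with hcdef
  have hcC : ∀ (i j : Fin 2) (T : A), c i j T ∈ C := by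
    intro i j T
    have key : ∀ p q : Fin 2, Commute (E p q) (c i j T) := by
      intro p q
      show E p q * c i j T = c i j T * E p q
      fin_cases p <;> fin_cases q <;>
        simp [hcdef, mul_add, add_mul, mul_assoc, hE, hE']
    have hall : ∀ m : M2, Commute (ι m) (c i j T) := by
      intro m
      rw [hιE m]
      exact ((((key 0 0).smul_left _).add_left ((key 0 1).smul_left _)).add_left
        ((key 1 0).smul_left _)).add_left ((key 1 1).smul_left _)
    rw [hCdef, StarSubalgebra.mem_centralizer_iff]
    intro g hg
    simp only [Set.mem_insert_iff, Set.mem_singleton_iff] at hg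
    rcases hg with rfl | rfl | rfl
    · exact ⟨(hall _).eq, by rw [← map_star, star_pauli₁]; exact (hall _).eq⟩
    · exact ⟨(hall _).eq, by rw [← map_star, star_pauli₂]; exact (hall _).eq⟩
    · exact ⟨(hall _).eq, by rw [← map_star, star_pauli₃]; exact (hall _).eq⟩
  -- the inverse map
  set Ψ : A → M2 ⊗[ℂ] C := fun T =>
    Matrix.single 0 0 (1:ℂ) ⊗ₜ[ℂ] (⟨c 0 0 T, hcC 0 0 T⟩ : C)
    + Matrix.single 0 1 (1:ℂ) ⊗ₜ[ℂ] (⟨c 0 1 T, hcC 0 1 T⟩ : C)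
    + Matrix.single 1 0 (1:ℂ) ⊗ₜ[ℂ] (⟨c 1 0 T, hcC 1 0 T⟩ : C)
    + Matrix.single 1 1 (1:ℂ) ⊗ₜ[ℂ] (⟨c 1 1 T, hcC 1 1 T⟩ : C) with hΨdef
  have hright : ∀ T : A, π0 (Ψ T) = T := by
    intro T
    have hsq : (E 0 0 + E 1 1) * (T * (E 0 0 + E 1 1)) = T := by
      rw [hone]; simp
    calc π0 (Ψ T)
        = E 0 0 * c 0 0 T + E 0 1 * c 0 1 T + E 1 0 * c 1 0 T + E 1 1 * c 1 1 T := by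
          simp only [hΨdef, map_add, hπ0, hEdef]
      _ = (E 0 0 + E 1 1) * (T * (E 0 0 + E 1 1)) := by
          simp only [hcdef, mul_add, add_mul, hE']
          norm_num
          abel
      _ = T := hsq
  have hΨadd : ∀ S T : A, Ψ (S + T) = Ψ S + Ψ T := by
    intro S T
    have hc : ∀ i j, (⟨c i j (S + T), hcC i j (S + T)⟩ : C)
        = ⟨c i j S, hcC i j S⟩ + ⟨c i j T, hcC i j T⟩ := by
      intro i j
      apply Subtype.ext
      show c i j (S + T) = c i j S + c i j T
      simp only [hcdef, add_mul, mul_add]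
      abel
    simp only [hΨdef, hc, TensorProduct.tmul_add]
    abel
  have hleft : ∀ x : M2 ⊗[ℂ] C, Ψ (π0 x) = x := by
    intro x
    induction x using TensorProduct.induction_on with
    | zero =>
        rw [map_zero]
        have hc : ∀ i j, (⟨c i j 0, hcC i j 0⟩ : C) = 0 := by
          intro i j
          apply Subtype.ext
          show c i j 0 = 0
          simp [hcdef]
        simp only [hΨdef, hc, TensorProduct.tmul_zero]
        abel
    | tmul m b =>
        rw [hπ0]
        have hbc : ∀ m' : M2, Commute (ι m') (b : A) := hcomm (b : A) b.2
        have hc : ∀ i j, (⟨c i j (ι m * (b : A)), hcC i j _⟩ : C) = m i j • b := by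
          intro i j
          apply Subtype.ext
          show c i j (ι m * (b : A)) = m i j • (b : A)
          have hmove : ∀ k : Fin 2, E k i * (ι m * (b : A) * E j k)
              = m i j • (E k k * (b : A)) := by
            intro k
            have hswap : (b : A) * E j k = E j k * (b : A) :=
              ((hbc (Matrix.single j k 1)).eq).symm
            have hsand : E k i * ι m * E j k = m i j • E k k := by
              show ι _ * ι m * ι _ = m i j • ι _
              rw [← _root_.map_mul, ← _root_.map_mul, std_sandwich, _root_.map_smul]
            rw [mul_assoc (ι m), hswap]
            calc E k i * (ι m * (E j k * (b : A)))
                = E k i * ι m * E j k * (b : A) := by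
                  simp only [mul_assoc]
              _ = (m i j • E k k) * (b : A) := by rw [hsand]
              _ = m i j • (E k k * (b : A)) := smul_mul_assoc _ _ _
          show E 0 i * (ι m * (b : A) * E j 0) + E 1 i * (ι m * (b : A) * E j 1)
              = m i j • (b : A)
          rw [hmove 0, hmove 1, ← smul_add, ← add_mul, hone, one_mul]
        simp only [hΨdef, hc]
        have hst : ∀ (i j : Fin 2),
            (Matrix.single i j (1:ℂ)) ⊗ₜ[ℂ] (m i j • b) = (m i j • Matrix.single i j (1:ℂ)) ⊗ₜ[ℂ] b :=
          fun i j => (TensorProduct.smul_tmul _ _ _).symm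
        rw [hst, hst, hst, hst, ← TensorProduct.add_tmul, ← TensorProduct.add_tmul,
          ← TensorProduct.add_tmul, ← m_decomp m]
    | add x y hx hy =>
        rw [map_add, hΨadd, hx, hy]
  have hbij : Function.Bijective π0 :=
    Function.bijective_iff_has_inverse.mpr ⟨Ψ, hleft, hright⟩
  refine ⟨AlgEquiv.ofBijective π0 hbij, fun m b => hπ0 m b, fun m b => ?_⟩
  show π0 (star m ⊗ₜ[ℂ] star b) = star (π0 (m ⊗ₜ[ℂ] b))
  rw [hπ0, hπ0, StarMul.star_mul, ← StarHomClass.map_star]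
  have hsb : ((star b : C) : A) = star (b : A) := rfl
  rw [hsb]
  exact (hcomm (star (b : A)) (star_mem b.2) (star m)).eq

end TPSAux

set_option maxHeartbeats 4000000

open scoped TensorProduct in
/-- **Tensor product structure:** with `C` the commutant of `{a₁, a₂, a₃}` in `B(H)`
(a star subalgebra) and `ι : M₂(ℂ) → B(H)` the unital star-algebra homomorphism with
`ι σᵢ = aᵢ`, there is a `ℂ`-algebra equivalence `π : M₂(ℂ) ⊗[ℂ] C ≃ B(H)` with
`π (m ⊗ b) = ι m ∘ b`, and `π` is star-preserving. -/
theorem tensor_product_structure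
    (U : ℝ → (H →L[ℂ] H)) (V : unitary (H →L[ℂ] H))
    (hU : ∀ (θ : ℝ) (ℓ : ℤ), U θ (e ℓ) = Complex.exp (Complex.I * ℓ * θ) • e ℓ)
    (hV : ∀ ℓ : ℤ, (V : H →L[ℂ] H) (e ℓ) = e (ℓ + 1)) :
    ∀ ι : Matrix (Fin 2) (Fin 2) ℂ →⋆ₐ[ℂ] (H →L[ℂ] H),
      ι !![0, 1; 1, 0] = a₁ U V →
      ι !![0, -Complex.I; Complex.I, 0] = a₂ U V →
      ι !![1, 0; 0, -1] = a₃ U →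
      ∃ π : (Matrix (Fin 2) (Fin 2) ℂ ⊗[ℂ]
          (StarSubalgebra.centralizer ℂ ({a₁ U V, a₂ U V, a₃ U} : Set (H →L[ℂ] H))))
            ≃ₐ[ℂ] (H →L[ℂ] H),
        (∀ (m : Matrix (Fin 2) (Fin 2) ℂ)
            (b : StarSubalgebra.centralizer ℂ ({a₁ U V, a₂ U V, a₃ U} : Set (H →L[ℂ] H))),
          π (m ⊗ₜ[ℂ] b) = ι m ∘L (b : H →L[ℂ] H)) ∧
        (∀ (m : Matrix (Fin 2) (Fin 2) ℂ)
            (b : StarSubalgebra.centralizer ℂ ({a₁ U V, a₂ U V, a₃ U} : Set (H →L[ℂ] H))),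
          π (star m ⊗ₜ[ℂ] star b) = star (π (m ⊗ₜ[ℂ] b))) := by
  intro ι h1 h2 h3
  clear hU hV
  have hset : ({a₁ U V, a₂ U V, a₃ U} : Set (H →L[ℂ] H))
      = {ι !![0, 1; 1, 0], ι !![0, -Complex.I; Complex.I, 0], ι !![1, 0; 0, -1]} := by
    rw [h1, h2, h3]
  rw [hset]
  obtain ⟨π, hπ, hstar⟩ := TPSAux.aux ι
  refine ⟨π, fun m b => ?_, hstar⟩
  rw [hπ m b]
  rfl
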